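/- Let m ≥ 1. The space of complex m×m matrices A with det(A^{(k)}) ≠ 0 for all k = 1, …, m (with the subspace topology from the space of m×m complex matrices) is homotopy equivalent to the m-torus (S¹)^m. -/

import Mathlib

open Matrix ContinuousMap

namespace LUProof

abbrev Cstar : Type := {s : ℂ // s ≠ 0}

abbrev Xm (m : ℕ) : Type :=
  {A : Matrix (Fin m) (Fin m) ℂ // ∀ k : ℕ, 1 ≤ k → ∀ hk : k ≤ m,
    (A.submatrix (Fin.castLE hk) (Fin.castLE hk)).det ≠ 0}

lemma det_ne_zero_of_mem {n : ℕ} (A : Xm n) : (A.1).det ≠ 0 := by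
  rcases Nat.eq_zero_or_pos n with h | h
  · subst h
    simp [Matrix.det_isEmpty]
  · have := A.2 n h le_rfl
    have hid : Fin.castLE (le_refl n) = (id : Fin n → Fin n) := funext fun i => rfl
    rwa [hid, Matrix.submatrix_id_id] at this

variable {m : ℕ}

/-- Build an `(m+1) × (m+1)` matrix from blocks. -/
noncomputable def mkMat (B : Matrix (Fin m) (Fin m) ℂ) (u v : Fin m → ℂ) (d : ℂ) :
    Matrix (Fin (m + 1)) (Fin (m + 1)) ℂ :=
  (Matrix.fromBlocks B (Matrix.replicateCol (Fin 1) u) (Matrix.replicateRow (Fin 1) v)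
    (Matrix.of fun _ _ => d)).submatrix finSumFinEquiv.symm finSumFinEquiv.symm

lemma symm_castSucc (i : Fin m) : finSumFinEquiv.symm (i.castSucc : Fin (m+1)) = Sum.inl i := by
  have : (i.castSucc : Fin (m+1)) = Fin.castAdd 1 i := rfl
  rw [this, finSumFinEquiv_symm_apply_castAdd]

lemma symm_last : finSumFinEquiv.symm (Fin.last m) = Sum.inr (0 : Fin 1) := by
  have : (Fin.last m) = Fin.natAdd m (0 : Fin 1) := by ext; simp
  rw [this, finSumFinEquiv_symm_apply_natAdd]

@[simp] lemma mkMat_cc (B : Matrix (Fin m) (Fin m) ℂ) (u v : Fin m → ℂ) (d : ℂ) (i j : Fin m) :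
    mkMat B u v d i.castSucc j.castSucc = B i j := by
  simp [mkMat, Matrix.submatrix_apply, symm_castSucc]

@[simp] lemma mkMat_cl (B : Matrix (Fin m) (Fin m) ℂ) (u v : Fin m → ℂ) (d : ℂ) (i : Fin m) :
    mkMat B u v d i.castSucc (Fin.last m) = u i := by
  simp [mkMat, Matrix.submatrix_apply, symm_castSucc, symm_last]

@[simp] lemma mkMat_lc (B : Matrix (Fin m) (Fin m) ℂ) (u v : Fin m → ℂ) (d : ℂ) (j : Fin m) :
    mkMat B u v d (Fin.last m) j.castSucc = v j := by
  simp [mkMat, Matrix.submatrix_apply, symm_castSucc, symm_last]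

@[simp] lemma mkMat_ll (B : Matrix (Fin m) (Fin m) ℂ) (u v : Fin m → ℂ) (d : ℂ) :
    mkMat B u v d (Fin.last m) (Fin.last m) = d := by
  simp [mkMat, Matrix.submatrix_apply, symm_last]

lemma eq_mkMat (A : Matrix (Fin (m+1)) (Fin (m+1)) ℂ) :
    A = mkMat (A.submatrix Fin.castSucc Fin.castSucc)
      (fun i => A i.castSucc (Fin.last m)) (fun j => A (Fin.last m) j.castSucc)
      (A (Fin.last m) (Fin.last m)) := by
  ext i j
  induction i using Fin.lastCases with
  | last => induction j using Fin.lastCases with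
    | last => simp
    | cast j => simp
  | cast i => induction j using Fin.lastCases with
    | last => simp
    | cast j => simp

lemma mkMat_minor (B : Matrix (Fin m) (Fin m) ℂ) (u v : Fin m → ℂ) (d : ℂ)
    {k : ℕ} (hk : k ≤ m) :
    (mkMat B u v d).submatrix (Fin.castLE (hk.trans m.le_succ)) (Fin.castLE (hk.trans m.le_succ))
      = B.submatrix (Fin.castLE hk) (Fin.castLE hk) := by
  ext i j
  have h1 : (Fin.castLE (hk.trans m.le_succ) i) = (Fin.castLE hk i).castSucc := by ext; simp
  have h2 : (Fin.castLE (hk.trans m.le_succ) j) = (Fin.castLE hk j).castSucc := by ext; simp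
  rw [Matrix.submatrix_apply, h1, h2, mkMat_cc, Matrix.submatrix_apply]

lemma det_mkMat (B : Matrix (Fin m) (Fin m) ℂ) (u v : Fin m → ℂ) (s : ℂ)
    (hB : B.det ≠ 0) :
    (mkMat B u v (v ⬝ᵥ B⁻¹ *ᵥ u + s)).det = B.det * s := by
  have : Invertible B := B.invertibleOfIsUnitDet (Ne.isUnit hB)
  rw [mkMat, Matrix.det_submatrix_equiv_self, Matrix.det_fromBlocks₁₁]
  congr 1
  rw [Matrix.det_fin_one]
  rw [Matrix.invOf_eq_nonsing_inv]
  have : (Matrix.replicateRow (Fin 1) v * B⁻¹ * Matrix.replicateCol (Fin 1) u) 0 0 = v ⬝ᵥ B⁻¹ *ᵥ u := by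
    rw [Matrix.mul_assoc, ← Matrix.replicateCol_mulVec, Matrix.replicateRow_mul_replicateCol_apply]
  simp [this]



namespace Step

variable (m : ℕ)

/-- The top-left corner map. -/
noncomputable def phiB (A : Xm (m+1)) : Xm m :=
  ⟨A.1.submatrix Fin.castSucc Fin.castSucc, by
    intro k hk1 hk
    have h := A.2 k hk1 (hk.trans m.le_succ)
    have hco : (Fin.castSucc ∘ Fin.castLE hk : Fin k → Fin (m+1))
        = Fin.castLE (hk.trans m.le_succ) := by
      funext i; ext; simp
    rw [Matrix.submatrix_submatrix, hco]
    exact h⟩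

noncomputable def phiu (A : Xm (m+1)) : Fin m → ℂ := fun i => A.1 i.castSucc (Fin.last m)
noncomputable def phiv (A : Xm (m+1)) : Fin m → ℂ := fun j => A.1 (Fin.last m) j.castSucc

noncomputable def phis (A : Xm (m+1)) : ℂ :=
  A.1 (Fin.last m) (Fin.last m) - phiv m A ⬝ᵥ ((phiB m A).1)⁻¹ *ᵥ phiu m A

lemma A_eq (A : Xm (m+1)) :
    A.1 = mkMat (phiB m A).1 (phiu m A) (phiv m A)
      (phiv m A ⬝ᵥ ((phiB m A).1)⁻¹ *ᵥ phiu m A + phis m A) := by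
  have h : phiv m A ⬝ᵥ ((phiB m A).1)⁻¹ *ᵥ phiu m A + phis m A
      = A.1 (Fin.last m) (Fin.last m) := by
    unfold phis; ring
  rw [h]
  exact eq_mkMat A.1

lemma det_A_eq (A : Xm (m+1)) : A.1.det = ((phiB m A).1).det * phis m A := by
  conv_lhs => rw [A_eq m A]
  exact det_mkMat _ _ _ _ (det_ne_zero_of_mem (phiB m A))

lemma phis_ne_zero (A : Xm (m+1)) : phis m A ≠ 0 := by
  intro h
  have := det_A_eq m A
  rw [h, mul_zero] at this
  exact det_ne_zero_of_mem A this

/-- The inverse matrix construction lands in `Xm (m+1)`. -/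
lemma mk_mem (B : Xm m) (u v : Fin m → ℂ) (s : Cstar) :
    ∀ k : ℕ, 1 ≤ k → ∀ hk : k ≤ m + 1,
      ((mkMat B.1 u v (v ⬝ᵥ (B.1)⁻¹ *ᵥ u + s.1)).submatrix
        (Fin.castLE hk) (Fin.castLE hk)).det ≠ 0 := by
  intro k hk1 hk
  rcases Nat.lt_succ_iff_lt_or_eq.mp (Nat.lt_succ_of_le hk) with h | h
  · have hkm : k ≤ m := Nat.lt_succ_iff.mp h
    rw [mkMat_minor B.1 u v _ hkm]
    exact B.2 k hk1 hkm
  · subst h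
    have hid : (Fin.castLE hk : Fin (m+1) → Fin (m+1)) = id := funext fun i => rfl
    rw [hid, Matrix.submatrix_id_id, det_mkMat _ _ _ _ (det_ne_zero_of_mem B)]
    exact mul_ne_zero (det_ne_zero_of_mem B) s.2

/-- The Schur-complement equivalence. -/
noncomputable def stepEquiv : Xm (m+1) ≃ (Xm m × ((Fin m → ℂ) × (Fin m → ℂ) × Cstar)) where
  toFun A := ⟨phiB m A, phiu m A, phiv m A, ⟨phis m A, phis_ne_zero m A⟩⟩
  invFun p := ⟨mkMat p.1.1 p.2.1 p.2.2.1 (p.2.2.1 ⬝ᵥ (p.1.1)⁻¹ *ᵥ p.2.1 + p.2.2.2.1),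
    mk_mem m p.1 p.2.1 p.2.2.1 p.2.2.2⟩
  left_inv A := by
    apply Subtype.ext
    exact (A_eq m A).symm
  right_inv p := by
    obtain ⟨B, u, v, s⟩ := p
    have hB : (mkMat B.1 u v (v ⬝ᵥ (B.1)⁻¹ *ᵥ u + s.1)).submatrix Fin.castSucc Fin.castSucc
        = B.1 := by
      ext i j
      exact mkMat_cc B.1 u v _ i j
    refine Prod.ext (Subtype.ext ?_) (Prod.ext ?_ (Prod.ext ?_ (Subtype.ext ?_)))
    · exact hB
    · funext i; exact mkMat_cl B.1 u v _ i
    · funext j; exact mkMat_lc B.1 u v _ j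
    · show phis m _ = s.1
      unfold phis phiv phiu phiB
      simp only [hB, mkMat_ll, mkMat_lc, mkMat_cl]
      ring

lemma continuous_inv_phiB :
    Continuous fun A : Xm (m+1) => ((phiB m A).1)⁻¹ := by
  have hBc : Continuous fun A : Xm (m+1) => (phiB m A).1 :=
    continuous_subtype_val.matrix_submatrix _ _
  have hrw : (fun A : Xm (m+1) => ((phiB m A).1)⁻¹)
      = fun A => ((phiB m A).1.det)⁻¹ • ((phiB m A).1).adjugate := by
    funext A
    rw [Matrix.inv_def, Ring.inverse_eq_inv']
  rw [hrw]
  apply continuous_matrix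
  intro i j
  simp only [Matrix.smul_apply, smul_eq_mul]
  exact ((hBc.matrix_det).inv₀ fun A => det_ne_zero_of_mem (phiB m A)).mul
    (hBc.matrix_adjugate.matrix_elem i j)

lemma continuous_toFun : Continuous (stepEquiv m) := by
  have hBc : Continuous fun A : Xm (m+1) => (phiB m A).1 :=
    continuous_subtype_val.matrix_submatrix _ _
  have hu : Continuous (phiu m) :=
    continuous_pi fun i => continuous_subtype_val.matrix_elem _ _
  have hv : Continuous (phiv m) :=
    continuous_pi fun j => continuous_subtype_val.matrix_elem _ _
  have hs : Continuous (phis m) :=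
    (continuous_subtype_val.matrix_elem _ _).sub
      (hv.dotProduct ((continuous_inv_phiB m).matrix_mulVec hu))
  exact (hBc.subtype_mk _).prodMk (hu.prodMk (hv.prodMk (hs.subtype_mk _)))

lemma continuous_invFun : Continuous (stepEquiv m).symm := by
  apply Continuous.subtype_mk
  apply Continuous.matrix_submatrix
  have hB : Continuous fun p : Xm m × ((Fin m → ℂ) × (Fin m → ℂ) × Cstar) => p.1.1 :=
    continuous_subtype_val.comp continuous_fst
  have hu : Continuous fun p : Xm m × ((Fin m → ℂ) × (Fin m → ℂ) × Cstar) => p.2.1 :=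
    continuous_fst.comp continuous_snd
  have hv : Continuous fun p : Xm m × ((Fin m → ℂ) × (Fin m → ℂ) × Cstar) => p.2.2.1 :=
    continuous_fst.comp (continuous_snd.comp continuous_snd)
  have hs : Continuous fun p : Xm m × ((Fin m → ℂ) × (Fin m → ℂ) × Cstar) => p.2.2.2.1 :=
    continuous_subtype_val.comp (continuous_snd.comp (continuous_snd.comp continuous_snd))
  have hinv : Continuous fun p : Xm m × ((Fin m → ℂ) × (Fin m → ℂ) × Cstar) => (p.1.1)⁻¹ := by
    have hrw : (fun p : Xm m × ((Fin m → ℂ) × (Fin m → ℂ) × Cstar) => (p.1.1)⁻¹)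
        = fun p => ((p.1.1).det)⁻¹ • (p.1.1).adjugate := by
      funext p
      rw [Matrix.inv_def, Ring.inverse_eq_inv']
    rw [hrw]
    apply continuous_matrix
    intro i j
    simp only [Matrix.smul_apply, smul_eq_mul]
    exact ((hB.matrix_det).inv₀ fun p => det_ne_zero_of_mem p.1).mul
      (hB.matrix_adjugate.matrix_elem i j)
  apply Continuous.matrix_fromBlocks hB
  · exact continuous_matrix fun i _ => (continuous_apply i).comp hu
  · exact continuous_matrix fun _ j => (continuous_apply j).comp hv
  · exact continuous_matrix fun _ _ =>
      (hv.dotProduct (hinv.matrix_mulVec hu)).add hs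

/-- The Schur complement homeomorphism. -/
noncomputable def stepHomeo : Xm (m+1) ≃ₜ (Xm m × ((Fin m → ℂ) × (Fin m → ℂ) × Cstar)) :=
  ⟨stepEquiv m, continuous_toFun m, continuous_invFun m⟩

end Step


abbrev Sph : Type := Metric.sphere (0 : ℂ) 1

noncomputable def toSph : C(Cstar, Sph) :=
  ⟨fun z => ⟨(‖z.1‖ : ℂ)⁻¹ * z.1, by
      rw [mem_sphere_zero_iff_norm]
      have h0 : ‖z.1‖ ≠ 0 := norm_ne_zero_iff.2 z.2
      rw [norm_mul, norm_inv, Complex.norm_real, Real.norm_of_nonneg (norm_nonneg _)]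
      exact inv_mul_cancel₀ h0⟩, by
    apply Continuous.subtype_mk
    exact (((Complex.continuous_ofReal.comp (continuous_subtype_val.norm)).inv₀
      (fun z => by
        simp only [Function.comp_apply, ne_eq, Complex.ofReal_eq_zero]
        exact norm_ne_zero_iff.2 z.2)).mul continuous_subtype_val)⟩

noncomputable def fromSph : C(Sph, Cstar) :=
  ⟨fun z => ⟨z.1, fun h => by
      have := mem_sphere_zero_iff_norm.mp z.2
      rw [h] at this; simp at this⟩,
    Continuous.subtype_mk continuous_subtype_val _⟩

lemma toSph_fromSph : toSph.comp fromSph = ContinuousMap.id Sph := by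
  ext z
  have := mem_sphere_zero_iff_norm.mp z.2
  simp [toSph, fromSph, this]

noncomputable def retraction : (fromSph.comp toSph).Homotopy (ContinuousMap.id Cstar) := by
  refine ⟨⟨fun p => ⟨((((1 - p.1) * ‖p.2.1‖ + p.1 : ℝ) : ℂ))⁻¹ * p.2.1, ?_⟩, ?_⟩, ?_, ?_⟩
  · have hpos : (0:ℝ) < (1 - p.1) * ‖p.2.1‖ + p.1 := by
      rcases eq_or_lt_of_le p.1.2.1 with h | h
      · have : ‖p.2.1‖ > 0 := norm_pos_iff.2 p.2.2
        nlinarith [p.1.2.2]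
      · nlinarith [p.1.2.2, norm_nonneg p.2.1]
    exact mul_ne_zero (by exact_mod_cast inv_ne_zero (ne_of_gt hpos)) p.2.2
  · apply Continuous.subtype_mk
    apply Continuous.mul
    · apply Continuous.inv₀
      · exact Complex.continuous_ofReal.comp
          (((continuous_const.sub (continuous_subtype_val.comp continuous_fst)).mul
            ((continuous_subtype_val.comp continuous_snd).norm)).add
            (continuous_subtype_val.comp continuous_fst))
      · intro p
        have hpos : (0:ℝ) < (1 - p.1) * ‖p.2.1‖ + p.1 := by
          rcases eq_or_lt_of_le p.1.2.1 with h | h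
          · have : ‖p.2.1‖ > 0 := norm_pos_iff.2 p.2.2
            nlinarith [p.1.2.2]
          · nlinarith [p.1.2.2, norm_nonneg p.2.1]
        exact_mod_cast ne_of_gt hpos
    · exact continuous_subtype_val.comp continuous_snd
  · intro z
    simp [fromSph, toSph]
  · intro z
    simp

noncomputable def cstarHomotopySph : Cstar ≃ₕ Sph where
  toFun := toSph
  invFun := fromSph
  left_inv := ⟨retraction⟩
  right_inv := by rw [toSph_fromSph]


/-- Splitting off the last circle factor of the torus. -/
noncomputable def torusSplit (m : ℕ) : (Fin (m+1) → Sph) ≃ₜ ((Fin m → Sph) × Sph) :=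
  ((Homeomorph.piCongrLeft (Y := fun _ : Fin (m+1) => Sph) finSumFinEquiv).symm.trans
    Homeomorph.sumArrowHomeomorphProdArrow).trans
    ((Homeomorph.refl (Fin m → Sph)).prodCongr (Homeomorph.funUnique (Fin 1) Sph))

noncomputable def factorEquiv (m : ℕ) : ((Fin m → ℂ) × (Fin m → ℂ) × Cstar) ≃ₕ Sph :=
  (((ContractibleSpace.hequiv_unit (Fin m → ℂ)).some).prodCongr
    (((ContractibleSpace.hequiv_unit (Fin m → ℂ)).some).prodCongr cstarHomotopySph)).trans
    ((Homeomorph.punitProd (Unit × Sph)).trans (Homeomorph.punitProd Sph)).toHomotopyEquiv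

instance : Subsingleton (Matrix (Fin 0) (Fin 0) ℂ) :=
  ⟨fun a b => by ext i j; exact i.elim0⟩

instance : Nonempty (Xm 0) :=
  ⟨⟨0, fun k hk1 hk => absurd (hk1.trans hk) (by simp)⟩⟩

noncomputable def mainEquiv : ∀ m : ℕ, Xm m ≃ₕ (Fin m → Sph)
  | 0 => (ContractibleSpace.hequiv (X := Xm 0) (Y := Fin 0 → Sph)).some
  | (m+1) =>
    ((Step.stepHomeo m).toHomotopyEquiv.trans
      ((mainEquiv m).prodCongr (factorEquiv m))).trans
      (torusSplit m).symm.toHomotopyEquiv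

end LUProof

/-- The space of complex `m × m` matrices all of whose leading principal minors are
nonzero is homotopy equivalent to the `m`-torus `(S¹)^m`. -/
theorem lu_complement_homotopy_torus (m : ℕ) (hm : 1 ≤ m) :
    Nonempty (ContinuousMap.HomotopyEquiv
      {A : Matrix (Fin m) (Fin m) ℂ // ∀ k : ℕ, 1 ≤ k → ∀ hk : k ≤ m,
        (A.submatrix (Fin.castLE hk) (Fin.castLE hk)).det ≠ 0}
      (Fin m → Metric.sphere (0 : ℂ) 1)) :=
  ⟨LUProof.mainEquiv m⟩
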